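/- Let H be a complex Hilbert space and let A, B be bounded linear operators on H. Let T be the bounded operator on H × H given by T(u, v) = (A u − B v, 0), and let P be the orthogonal projection of H × H onto the kernel of T. Define bounded operators on H by X u := (P(u, 0)).1, Z u := (P(u, 0)).2, Y v := (P(0, v)).2, and note that the remaining block of P is Z*, i.e., (P(0, v)).1 = Z* v. Then X and Y are positive operators, and (range A) ∩ (range B) = range(A ∘ X) + range(A ∘ Z*) = range(B ∘ Z) + range(B ∘ Y), where + denotes the sum of subspaces of H. -/

import Mathlib

set_option synthInstance.maxHeartbeats 400000
set_option maxHeartbeats 1000000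

open ContinuousLinearMap

open scoped ComplexInnerProductSpace

variable {H : Type*} [NormedAddCommGroup H] [InnerProductSpace ℂ H] [CompleteSpace H]

/-- The orthogonal projection of the Hilbert space `H × H` (with the product, i.e. `L²`,
inner product) onto the kernel of `T`, regarded as a bounded operator. -/
noncomputable def kerProj (T : WithLp 2 (H × H) →L[ℂ] WithLp 2 (H × H)) :
    WithLp 2 (H × H) →L[ℂ] WithLp 2 (H × H) :=
  haveI : CompleteSpace (LinearMap.ker (T : WithLp 2 (H × H) →ₗ[ℂ] WithLp 2 (H × H))) := T.isClosed_ker.completeSpace_coe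
  (LinearMap.ker (T : WithLp 2 (H × H) →ₗ[ℂ] WithLp 2 (H × H))).subtypeL ∘L
    (LinearMap.ker (T : WithLp 2 (H × H) →ₗ[ℂ] WithLp 2 (H × H))).orthogonalProjectionOnto

/-- Lemma 3.9 (range identities): with `T(u,v) = (Au - Bv, 0)` on `H × H`, `P` the
orthogonal projection onto `ker T`, and `X u = (P(u,0)).1`, `Z u = (P(u,0)).2`,
`Y v = (P(0,v)).2`, the operators `X, Y` are positive, the remaining block of `P` is
`Z*`, and `range A ∩ range B = range (A X) + range (A Z*) = range (B Z) + range (B Y)`. -/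
theorem stmt12 (A B : H →L[ℂ] H)
    (T : WithLp 2 (H × H) →L[ℂ] WithLp 2 (H × H))
    (hT : ∀ u v : H, T ((WithLp.equiv 2 (H × H)).symm (u, v)) =
      (WithLp.equiv 2 (H × H)).symm (A u - B v, 0))
    (X Y Z : H →L[ℂ] H)
    (hX : ∀ u : H,
      X u = (WithLp.equiv 2 (H × H) (kerProj T ((WithLp.equiv 2 (H × H)).symm (u, 0)))).1)
    (hZ : ∀ u : H,
      Z u = (WithLp.equiv 2 (H × H) (kerProj T ((WithLp.equiv 2 (H × H)).symm (u, 0)))).2)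
    (hY : ∀ v : H,
      Y v = (WithLp.equiv 2 (H × H) (kerProj T ((WithLp.equiv 2 (H × H)).symm (0, v)))).2) :
    X.IsPositive ∧ Y.IsPositive ∧
    (∀ v : H,
      (WithLp.equiv 2 (H × H) (kerProj T ((WithLp.equiv 2 (H × H)).symm (0, v)))).1 =
        adjoint Z v) ∧
    LinearMap.range (A : H →ₗ[ℂ] H) ⊓ LinearMap.range (B : H →ₗ[ℂ] H) =
      LinearMap.range (A ∘L X : H →ₗ[ℂ] H) ⊔ LinearMap.range (A ∘L adjoint Z : H →ₗ[ℂ] H) ∧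
    LinearMap.range (A : H →ₗ[ℂ] H) ⊓ LinearMap.range (B : H →ₗ[ℂ] H) =
      LinearMap.range (B ∘L Z : H →ₗ[ℂ] H) ⊔ LinearMap.range (B ∘L Y : H →ₗ[ℂ] H) := by
  classical
  haveI : CompleteSpace (LinearMap.ker (T : WithLp 2 (H × H) →ₗ[ℂ] WithLp 2 (H × H))) := T.isClosed_ker.completeSpace_coe
  set es : H × H ≃ WithLp 2 (H × H) := (WithLp.equiv 2 (H × H)).symm with hes
  set P : WithLp 2 (H × H) →L[ℂ] WithLp 2 (H × H) := kerProj T with hPdef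
  -- basic projection facts
  have hPmem : ∀ x, P x ∈ LinearMap.ker (T : WithLp 2 (H × H) →ₗ[ℂ] WithLp 2 (H × H)) := fun x => by
    simp only [hPdef, kerProj, comp_apply, Submodule.subtypeL_apply]
    exact SetLike.coe_mem _
  have hPfix : ∀ x ∈ LinearMap.ker (T : WithLp 2 (H × H) →ₗ[ℂ] WithLp 2 (H × H)), P x = x := fun x hx => by
    simp only [hPdef, kerProj, comp_apply, Submodule.subtypeL_apply]
    exact Submodule.starProjection_eq_self_iff.mpr hx
  have hPsym : ∀ x y, ⟪P x, y⟫ = ⟪x, P y⟫ := fun x y => by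
    simp only [hPdef, kerProj, comp_apply, Submodule.subtypeL_apply]
    exact Submodule.inner_starProjection_left_eq_right _ x y
  -- membership in ker T
  have mker : ∀ u v : H, (es (u, v) ∈ LinearMap.ker (T : WithLp 2 (H × H) →ₗ[ℂ] WithLp 2 (H × H)) ↔ A u = B v) := by
    intro u v
    have h0 : es ((0 : H), (0 : H)) = 0 := by simp [hes]
    rw [LinearMap.mem_ker, ContinuousLinearMap.coe_coe, hT, ← h0, es.injective.eq_iff, Prod.ext_iff]
    simp [sub_eq_zero]
  -- inner product component identities
  have ipR1 : ∀ (x : WithLp 2 (H × H)) (w : H),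
      ⟪x, es (w, 0)⟫ = ⟪(WithLp.equiv 2 (H × H) x).1, w⟫ := by
    intro x w
    rw [WithLp.prod_inner_apply]
    simp [hes, WithLp.ofLp_fst]
  have ipR2 : ∀ (x : WithLp 2 (H × H)) (w : H),
      ⟪x, es (0, w)⟫ = ⟪(WithLp.equiv 2 (H × H) x).2, w⟫ := by
    intro x w
    rw [WithLp.prod_inner_apply]
    simp [hes, WithLp.ofLp_snd]
  have ipL1 : ∀ (x : WithLp 2 (H × H)) (w : H),
      ⟪es (w, 0), x⟫ = ⟪w, (WithLp.equiv 2 (H × H) x).1⟫ := by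
    intro x w
    rw [WithLp.prod_inner_apply]
    simp [hes, WithLp.ofLp_fst]
  have ipL2 : ∀ (x : WithLp 2 (H × H)) (w : H),
      ⟪es (0, w), x⟫ = ⟪w, (WithLp.equiv 2 (H × H) x).2⟫ := by
    intro x w
    rw [WithLp.prod_inner_apply]
    simp [hes, WithLp.ofLp_snd]
  -- positivity of X
  have hXpos : X.IsPositive := by
    constructor
    · intro u w
      calc ⟪X u, w⟫ = ⟪P (es (u, 0)), es (w, 0)⟫ := by rw [hX]; exact (ipR1 _ _).symm
        _ = ⟪es (u, 0), P (es (w, 0))⟫ := hPsym _ _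
        _ = ⟪u, X w⟫ := by rw [ipL1, hX]
    · intro u
      rw [reApplyInnerSelf]
      have h1 : ⟪X u, u⟫ = ⟪P (es (u, 0)), P (es (u, 0))⟫ := by
        calc ⟪X u, u⟫ = ⟪P (es (u, 0)), es (u, 0)⟫ := by rw [hX]; exact (ipR1 _ _).symm
          _ = ⟪P (P (es (u, 0))), es (u, 0)⟫ := by rw [hPfix _ (hPmem _)]
          _ = ⟪P (es (u, 0)), P (es (u, 0))⟫ := hPsym _ _
      rw [h1]
      exact inner_self_nonneg
  -- positivity of Y
  have hYpos : Y.IsPositive := by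
    constructor
    · intro u w
      calc ⟪Y u, w⟫ = ⟪P (es (0, u)), es (0, w)⟫ := by rw [hY]; exact (ipR2 _ _).symm
        _ = ⟪es (0, u), P (es (0, w))⟫ := hPsym _ _
        _ = ⟪u, Y w⟫ := by rw [ipL2, hY]
    · intro u
      rw [reApplyInnerSelf]
      have h1 : ⟪Y u, u⟫ = ⟪P (es (0, u)), P (es (0, u))⟫ := by
        calc ⟪Y u, u⟫ = ⟪P (es (0, u)), es (0, u)⟫ := by rw [hY]; exact (ipR2 _ _).symm
          _ = ⟪P (P (es (0, u))), es (0, u)⟫ := by rw [hPfix _ (hPmem _)]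
          _ = ⟪P (es (0, u)), P (es (0, u))⟫ := hPsym _ _
      rw [h1]
      exact inner_self_nonneg
  -- the remaining block is Z*
  have hblock : ∀ v : H,
      (WithLp.equiv 2 (H × H) (P (es (0, v)))).1 = adjoint Z v := by
    intro v
    refine ext_inner_right ℂ fun u => ?_
    calc ⟪(WithLp.equiv 2 (H × H) (P (es (0, v)))).1, u⟫
        = ⟪P (es (0, v)), es (u, 0)⟫ := (ipR1 _ _).symm
      _ = ⟪es (0, v), P (es (u, 0))⟫ := hPsym _ _
      _ = ⟪v, Z u⟫ := by rw [ipL2, hZ]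
      _ = ⟪adjoint Z v, u⟫ := (adjoint_inner_left Z u v).symm
  -- explicit form of P on the two slices
  have hP1 : ∀ u : H, P (es (u, 0)) = es (X u, Z u) := by
    intro u
    have : WithLp.equiv 2 (H × H) (P (es (u, 0))) = (X u, Z u) :=
      Prod.ext (hX u).symm (hZ u).symm
    rw [hes, ← this, Equiv.symm_apply_apply]
  have hP2 : ∀ v : H, P (es (0, v)) = es (adjoint Z v, Y v) := by
    intro v
    have : WithLp.equiv 2 (H × H) (P (es (0, v))) = (adjoint Z v, Y v) :=
      Prod.ext (hblock v) (hY v).symm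
    rw [hes, ← this, Equiv.symm_apply_apply]
  -- the intertwining identities
  have hAXBZ : ∀ u : H, A (X u) = B (Z u) := fun u => by
    have := hPmem (es (u, 0))
    rw [hP1 u, mker] at this
    exact this
  have hAZBY : ∀ v : H, A (adjoint Z v) = B (Y v) := fun v => by
    have := hPmem (es (0, v))
    rw [hP2 v, mker] at this
    exact this
  -- additivity of the slices
  have hadd : ∀ u v : H, es (u, v) = es (u, 0) + es (0, v) := by
    intro u v
    rw [hes, WithLp.equiv_symm_apply, ← WithLp.toLp_add]
    norm_num
  -- decomposition of elements of range A ⊓ range B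
  have hdec : ∀ u v : H, A u = B v → (X u + adjoint Z v = u ∧ Z u + Y v = v) := by
    intro u v huv
    have hmem : es (u, v) ∈ LinearMap.ker (T : WithLp 2 (H × H) →ₗ[ℂ] WithLp 2 (H × H)) := (mker u v).mpr huv
    have hfix := hPfix _ hmem
    rw [hadd u v, map_add, hP1, hP2, ← hadd] at hfix
    have hsum : ∀ a b c d : H, es (a, b) + es (c, d) = es (a + c, b + d) := by
      intro a b c d
      rw [hes, WithLp.equiv_symm_apply, ← WithLp.toLp_add, Prod.mk_add_mk]
    rw [hsum] at hfix
    have := es.injective hfix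
    exact ⟨congrArg Prod.fst this, congrArg Prod.snd this⟩
  refine ⟨hXpos, hYpos, hblock, ?_, ?_⟩
  · apply le_antisymm
    · rintro w ⟨⟨u, rfl⟩, v, hv⟩
      refine Submodule.mem_sup.mpr ⟨A (X u), ⟨u, rfl⟩, A (adjoint Z v), ⟨v, rfl⟩, ?_⟩
      obtain ⟨h1, _⟩ := hdec u v hv.symm
      rw [← map_add, h1]; rfl
    · refine sup_le ?_ ?_
      · rintro w ⟨u, rfl⟩
        exact ⟨⟨X u, rfl⟩, ⟨Z u, (hAXBZ u).symm⟩⟩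
      · rintro w ⟨v, rfl⟩
        exact ⟨⟨adjoint Z v, rfl⟩, ⟨Y v, (hAZBY v).symm⟩⟩
  · apply le_antisymm
    · rintro w ⟨⟨u, hu⟩, v, rfl⟩
      refine Submodule.mem_sup.mpr ⟨B (Z u), ⟨u, rfl⟩, B (Y v), ⟨v, rfl⟩, ?_⟩
      obtain ⟨_, h2⟩ := hdec u v hu
      rw [← map_add, h2]; rfl
    · refine sup_le ?_ ?_
      · rintro w ⟨u, rfl⟩
        exact ⟨⟨X u, hAXBZ u⟩, ⟨Z u, rfl⟩⟩
      · rintro w ⟨v, rfl⟩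
        exact ⟨⟨adjoint Z v, hAZBY v⟩, ⟨Y v, rfl⟩⟩
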